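/- Let n ≥ 1 be a natural number and p ∈ [0,1]. For ω : {(i,j) : Fin n × Fin n // i < j} → Bool define the weight w_p(ω) := ∏_{(i,j), i<j} (if ω(i,j) = true then p else 1−p), and let G(ω) be the simple graph on Fin n in which distinct vertices i, j are adjacent iff ω evaluated at (min(i,j), max(i,j)) is true. Then Σ_{ω such that G(ω) is not preconnected} w_p(ω) ≤ Σ_{k=1}^{⌊n/2⌋} (n choose k) · (1−p)^{k(n−k)}. -/

import Mathlib

/-- The simple graph on `Fin n` determined by the edge indicator
`ω : {(i,j) : i < j} → Bool`: distinct vertices `i, j` are adjacent iff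
`ω` evaluated at `(min i j, max i j)` is `true`. -/
def graphOf {n : ℕ} (ω : {ij : Fin n × Fin n // ij.1 < ij.2} → Bool) :
    SimpleGraph (Fin n) where
  Adj i j := ∃ h : min i j < max i j, ω ⟨(min i j, max i j), h⟩ = true
  symm := by
    constructor
    intro i j hij
    rwa [min_comm j i, max_comm j i]
  loopless := by
    constructor
    intro i hi
    obtain ⟨h, -⟩ := hi
    simp at h

/-- The `G(n,p)` weight of an edge configuration `ω`: each potential edge independently
contributes `p` if present and `1−p` if absent. -/
noncomputable def edgeWeight {n : ℕ} (p : ℝ)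
    (ω : {ij : Fin n × Fin n // ij.1 < ij.2} → Bool) : ℝ :=
  ∏ e : {ij : Fin n × Fin n // ij.1 < ij.2}, (if ω e = true then p else 1 - p)

namespace ErdosRenyiAux

open Finset

variable {n : ℕ}

abbrev E (n : ℕ) := {ij : Fin n × Fin n // ij.1 < ij.2}

/-- `e` is a crossing edge for `S`: exactly one endpoint lies in `S`. -/
def crossing (S : Finset (Fin n)) (e : E n) : Prop :=
  (e.1.1 ∈ S ∧ e.1.2 ∉ S) ∨ (e.1.1 ∉ S ∧ e.1.2 ∈ S)

instance (S : Finset (Fin n)) (e : E n) : Decidable (crossing S e) := by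
  unfold crossing; infer_instance

lemma crossing_compl (S : Finset (Fin n)) (e : E n) :
    crossing Sᶜ e ↔ crossing S e := by
  unfold crossing
  simp only [Finset.mem_compl]
  tauto

/-- Summing a product of per-coordinate functions over all Boolean configurations. -/
lemma sum_prod_bool {ι : Type*} [Fintype ι] [DecidableEq ι] (h : ι → Bool → ℝ) :
    ∑ ω : ι → Bool, ∏ i, h i (ω i) = ∏ i, (h i true + h i false) := by
  have := Fintype.prod_sum (κ := fun _ : ι => Bool) (f := h)
  simp only [Fintype.sum_bool] at this
  exact this.symm

lemma edgeWeight_nonneg {p : ℝ} (hp : p ∈ Set.Icc (0:ℝ) 1) (ω : E n → Bool) :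
    0 ≤ edgeWeight p ω := by
  refine Finset.prod_nonneg fun e _ => ?_
  split <;> [exact hp.1; linarith [hp.2]]

/-- The set of configurations with no crossing edge of `S`. -/
def B (S : Finset (Fin n)) : Finset (E n → Bool) :=
  univ.filter fun ω => ∀ e, crossing S e → ω e = false

/-- The crossing edges of `S` are in bijection with `S × Sᶜ`. -/
lemma card_crossing (S : Finset (Fin n)) :
    (univ.filter (crossing S)).card = S.card * (n - S.card) := by
  have : (univ.filter (crossing S)).card = (S ×ˢ Sᶜ).card := by
    refine Finset.card_bij'
      (fun e _ => if e.1.1 ∈ S then (e.1.1, e.1.2) else (e.1.2, e.1.1))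
      (fun b hb => ⟨(min b.1 b.2, max b.1 b.2), by
        rcases Finset.mem_product.1 hb with ⟨h1, h2⟩
        exact min_lt_max.2 fun hc => (Finset.mem_compl.1 h2) (hc ▸ h1)⟩)
      ?_ ?_ ?_ ?_
    · -- hi
      intro e he
      rcases (Finset.mem_filter.1 he).2 with ⟨h1, h2⟩ | ⟨h1, h2⟩
      · simp [h1, Finset.mem_product, h2]
      · simp [h1, Finset.mem_product, h2]
    · -- hj
      intro b hb
      rcases Finset.mem_product.1 hb with ⟨h1, h2⟩
      have h2' := Finset.mem_compl.1 h2
      simp only [Finset.mem_filter, Finset.mem_univ, true_and, crossing]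
      rcases le_or_gt b.1 b.2 with hle | hlt
      · rw [min_eq_left hle, max_eq_right hle]
        exact Or.inl ⟨h1, h2'⟩
      · rw [min_eq_right hlt.le, max_eq_left hlt.le]
        exact Or.inr ⟨h2', h1⟩
    · -- left_inv
      intro e he
      have hlt := e.2
      rcases (Finset.mem_filter.1 he).2 with ⟨h1, h2⟩ | ⟨h1, h2⟩
      · refine Subtype.ext ?_
        dsimp only
        rw [if_pos h1, min_eq_left hlt.le, max_eq_right hlt.le]
      · refine Subtype.ext ?_
        dsimp only
        rw [if_neg h1, min_eq_right hlt.le, max_eq_left hlt.le]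
    · -- right_inv
      intro b hb
      rcases Finset.mem_product.1 hb with ⟨h1, h2⟩
      have h2' := Finset.mem_compl.1 h2
      dsimp only
      rcases le_or_gt b.1 b.2 with hle | hlt
      · simp [min_eq_left hle, max_eq_right hle, h1]
      · simp [min_eq_right hlt.le, max_eq_left hlt.le, h2']
  rw [this, Finset.card_product, Finset.card_compl, Fintype.card_fin]

/-- The total weight of configurations with no crossing edge of `S`. -/
lemma sum_B (p : ℝ) (S : Finset (Fin n)) :
    ∑ ω ∈ B S, edgeWeight p ω = (1 - p) ^ (S.card * (n - S.card)) := by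
  classical
  rw [← card_crossing S]
  set h : E n → Bool → ℝ := fun e b =>
    if crossing S e then (if b then 0 else 1 - p) else (if b then p else 1 - p) with hh
  have key : ∑ ω ∈ B S, edgeWeight p ω = ∑ ω : E n → Bool, ∏ e, h e (ω e) := by
    rw [B, Finset.sum_filter]
    refine Finset.sum_congr rfl fun ω _ => ?_
    by_cases hω : ∀ e, crossing S e → ω e = false
    · rw [if_pos hω]
      unfold edgeWeight
      refine Finset.prod_congr rfl fun e _ => ?_
      by_cases hc : crossing S e
      · rw [hω e hc]
        simp [hh, hc]
      · simp [hh, hc]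
    · rw [if_neg hω]
      push_neg at hω
      obtain ⟨e, hc, hne⟩ := hω
      have : ω e = true := by simpa using hne
      refine (Finset.prod_eq_zero (Finset.mem_univ e) ?_).symm
      simp [hh, hc, this]
  rw [key, sum_prod_bool]
  have : ∀ e : E n, h e true + h e false = if crossing S e then 1 - p else 1 := by
    intro e
    by_cases hc : crossing S e <;> simp [hh, hc]
  rw [Finset.prod_congr rfl fun e _ => this e, Finset.prod_ite (fun _ => 1 - p) (fun _ => 1),
    Finset.prod_const, Finset.prod_const_one, mul_one]

/-- Union bound: a sum of a nonnegative function over a finite union is at most the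
sum of the sums. -/
lemma sum_biUnion_le' {ι α : Type*} [DecidableEq α] (s : Finset ι) (t : ι → Finset α)
    (f : α → ℝ) (hf : ∀ x, 0 ≤ f x) :
    ∑ x ∈ s.biUnion t, f x ≤ ∑ i ∈ s, ∑ x ∈ t i, f x := by
  classical
  induction s using Finset.induction_on with
  | empty => simp
  | @insert i s hi ih =>
    rw [Finset.biUnion_insert, Finset.sum_insert hi]
    have hsplit : ∑ x ∈ t i ∪ s.biUnion t, f x
        ≤ ∑ x ∈ t i, f x + ∑ x ∈ s.biUnion t, f x := by
      rw [← Finset.sum_union_inter]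
      have : 0 ≤ ∑ x ∈ t i ∩ s.biUnion t, f x := Finset.sum_nonneg fun x _ => hf x
      linarith
    exact le_trans hsplit (by linarith [ih])

/-- Every disconnected configuration has a crossing-free cut of size between 1 and n/2. -/
lemma exists_cut (ω : E n → Bool) (h : ¬ (graphOf ω).Preconnected) :
    ∃ S : Finset (Fin n), 1 ≤ S.card ∧ S.card ≤ n / 2 ∧
      ∀ e, crossing S e → ω e = false := by
  classical
  unfold SimpleGraph.Preconnected at h
  push_neg at h
  obtain ⟨u, v, huv⟩ := h
  set T : Finset (Fin n) := univ.filter fun x => (graphOf ω).Reachable u x with hT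
  have hu : u ∈ T := by
    simp only [hT, Finset.mem_filter, Finset.mem_univ, true_and]
    exact SimpleGraph.Reachable.refl u
  have hv : v ∉ T := by simp [hT, huv]
  have hclosed : ∀ e : E n, crossing T e → ω e = false := by
    intro e hc
    by_contra hne
    have hωe : ω e = true := by simpa using hne
    have hadj : (graphOf ω).Adj e.1.1 e.1.2 := by
      refine ⟨by rw [min_eq_left e.2.le, max_eq_right e.2.le]; exact e.2, ?_⟩
      have h1 : min e.1.1 e.1.2 = e.1.1 := min_eq_left e.2.le
      have h2 : max e.1.1 e.1.2 = e.1.2 := max_eq_right e.2.le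
      convert hωe using 2
      exact Subtype.ext (Prod.ext h1 h2)
    have hiff : e.1.1 ∈ T ↔ e.1.2 ∈ T := by
      simp only [hT, Finset.mem_filter, Finset.mem_univ, true_and]
      exact ⟨fun hr => hr.trans hadj.reachable, fun hr => hr.trans hadj.symm.reachable⟩
    rcases hc with ⟨h1, h2⟩ | ⟨h1, h2⟩
    · exact h2 (hiff.1 h1)
    · exact h1 (hiff.2 h2)
  have hTcard : 1 ≤ T.card := Finset.card_pos.2 ⟨u, hu⟩
  have hTne : T.card ≤ n - 1 := by
    have : T ⊆ univ \ {v} := fun x hx => by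
      simp only [Finset.mem_sdiff, Finset.mem_univ, Finset.mem_singleton, true_and]
      rintro rfl; exact hv hx
    calc T.card ≤ (univ \ {v} : Finset (Fin n)).card := Finset.card_le_card this
      _ = n - 1 := by rw [Finset.card_sdiff_of_subset (by simp)]; simp
  have hTle : T.card ≤ n := le_trans hTne (Nat.sub_le n 1)
  by_cases hsmall : T.card ≤ n / 2
  · exact ⟨T, hTcard, hsmall, hclosed⟩
  · refine ⟨Tᶜ, ?_, ?_, fun e hc => hclosed e ((crossing_compl T e).1 hc)⟩
    · rw [Finset.card_compl, Fintype.card_fin]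
      omega
    · rw [Finset.card_compl, Fintype.card_fin]
      omega

end ErdosRenyiAux

-- **Statement 7.** (Proof of Theorem 6 of the paper.) The probability that the
-- Erdős–Rényi graph `G(n,p)` is disconnected is at most
-- `Σ_{k=1}^{⌊n/2⌋} C(n,k)·(1−p)^{k(n−k)}`.
open Classical in
theorem erdos_renyi_disconnected_prob_le (n : ℕ) (hn : 1 ≤ n) (p : ℝ)
    (hp : p ∈ Set.Icc (0:ℝ) 1) :
    ∑ ω ∈ Finset.univ.filter
        (fun ω : {ij : Fin n × Fin n // ij.1 < ij.2} → Bool =>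
          ¬ (graphOf ω).Preconnected),
      edgeWeight p ω
      ≤ ∑ k ∈ Finset.Icc 1 (n/2), (n.choose k : ℝ) * (1-p)^(k*(n-k)) := by
  classical
  open ErdosRenyiAux Finset in
  -- the family of candidate cuts
  set 𝒮 : Finset (Finset (Fin n)) :=
    (Finset.Icc 1 (n / 2)).biUnion (fun k => Finset.powersetCard k Finset.univ) with h𝒮
  have hmem𝒮 : ∀ S : Finset (Fin n), S ∈ 𝒮 ↔ 1 ≤ S.card ∧ S.card ≤ n / 2 := by
    intro S
    simp only [h𝒮, Finset.mem_biUnion, Finset.mem_Icc, Finset.mem_powersetCard_univ]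
    constructor
    · rintro ⟨k, ⟨h1, h2⟩, rfl⟩; exact ⟨h1, h2⟩
    · rintro ⟨h1, h2⟩; exact ⟨S.card, ⟨h1, h2⟩, rfl⟩
  have step1 :
      ∑ ω ∈ Finset.univ.filter
        (fun ω : E n → Bool => ¬ (graphOf ω).Preconnected), edgeWeight p ω
      ≤ ∑ S ∈ 𝒮, ∑ ω ∈ B S, edgeWeight p ω := by
    have hsub : Finset.univ.filter
        (fun ω : E n → Bool => ¬ (graphOf ω).Preconnected) ⊆ 𝒮.biUnion B := by
      intro ω hω
      have hω' : ¬ (graphOf ω).Preconnected := (Finset.mem_filter.1 hω).2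
      obtain ⟨S, h1, h2, h3⟩ := exists_cut ω hω'
      refine Finset.mem_biUnion.2 ⟨S, (hmem𝒮 S).2 ⟨h1, h2⟩, ?_⟩
      simp only [B, Finset.mem_filter, Finset.mem_univ, true_and]
      exact h3
    calc ∑ ω ∈ Finset.univ.filter
          (fun ω : E n → Bool => ¬ (graphOf ω).Preconnected), edgeWeight p ω
        ≤ ∑ ω ∈ 𝒮.biUnion B, edgeWeight p ω :=
          Finset.sum_le_sum_of_subset_of_nonneg hsub
            (fun ω _ _ => edgeWeight_nonneg hp ω)
      _ ≤ ∑ S ∈ 𝒮, ∑ ω ∈ B S, edgeWeight p ω :=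
          sum_biUnion_le' 𝒮 B (edgeWeight p) (edgeWeight_nonneg hp)
  refine le_trans step1 ?_
  have step2 : ∑ S ∈ 𝒮, ∑ ω ∈ B S, edgeWeight p ω
      = ∑ k ∈ Finset.Icc 1 (n / 2), (n.choose k : ℝ) * (1 - p) ^ (k * (n - k)) := by
    rw [h𝒮, Finset.sum_biUnion]
    · refine Finset.sum_congr rfl fun k hk => ?_
      have : ∀ S ∈ Finset.powersetCard k (Finset.univ : Finset (Fin n)),
          ∑ ω ∈ B S, edgeWeight p ω = (1 - p) ^ (k * (n - k)) := by
        intro S hS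
        rw [sum_B p S, Finset.mem_powersetCard_univ.1 hS]
      rw [Finset.sum_congr rfl this, Finset.sum_const, Finset.card_powersetCard,
        Finset.card_univ, Fintype.card_fin, nsmul_eq_mul]
    · intro k hk l hl hkl
      simp only [Finset.disjoint_left]
      intro S hSk hSl
      rw [Finset.mem_coe] at hk hl
      exact hkl ((Finset.mem_powersetCard_univ.1 hSk) ▸ (Finset.mem_powersetCard_univ.1 hSl) ▸ rfl)
  exact le_of_eq step2
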